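/- Let w ∈ V⁺ be a nonempty finite word with LAR(w) = v_k v_{k−1} ⋯ v_1. Then w factorizes as w = x_k v_k x_{k−1} v_{k−1} ⋯ x_2 v_2 x_1 v_1 for some finite words x_i ∈ V* with occ(x_i) ⊆ {v_1, …, v_i} for every i. -/

import Mathlib

variable {V : Type*}

/-- One step of the latest-appearance-record update. -/
def larStep [DecidableEq V] (ℓ : List V) (v : V) : List V := ℓ.erase v ++ [v]

/-- The latest appearance record `LAR(w)` of a finite word. -/
def LARof [DecidableEq V] (w : List V) : List V := w.foldl larStep []

inductive Good : List V → List V → Prop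
  | nil : Good [] []
  | cons (x w ℓ : List V) (v : V) (hx : ∀ a ∈ x, a ∈ v :: ℓ) (h : Good w ℓ) :
      Good (x ++ v :: w) (v :: ℓ)

lemma good_append {w ℓ : List V} (h : Good w ℓ) :
    ∀ y v, (∀ a ∈ y, a ∈ ℓ ++ [v]) → Good (y ++ (w ++ [v])) (ℓ ++ [v]) := by
  induction h with
  | nil =>
    intro y v hy
    simpa using Good.cons y [] [] v (by simpa using hy) Good.nil
  | cons x w' ℓ' u hx h ih =>
    intro y v hy
    have e : y ++ ((x ++ u :: w') ++ [v]) = (y ++ x) ++ u :: (w' ++ [v]) := by simp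
    rw [e]
    refine Good.cons _ _ _ _ ?_ (by simpa using ih [] v (by simp))
    intro a ha
    rcases List.mem_append.1 ha with ha | ha
    · simpa using hy a ha
    · rcases List.mem_cons.1 (hx a ha) with h' | h'
      · exact h' ▸ List.mem_cons_self
      · exact List.mem_cons_of_mem _ (List.mem_append_left _ h')

lemma good_erase [DecidableEq V] {w ℓ : List V} (h : Good w ℓ) (v : V) (hv : v ∈ ℓ) :
    Good (w ++ [v]) (ℓ.erase v ++ [v]) := by
  induction h with
  | nil => simp at hv
  | cons x w' ℓ' u hx h ih =>
    rcases eq_or_ne v u with rfl | hne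
    · rw [List.erase_cons_head]
      have := good_append h (x ++ [v]) v (by
        intro a ha
        rcases List.mem_append.1 ha with ha | ha
        · rcases List.mem_cons.1 (hx a ha) with h' | h'
          · exact h' ▸ List.mem_append_right _ (List.mem_singleton_self _)
          · exact List.mem_append_left _ h'
        · simp at ha; simp [ha])
      simpa using this
    · have hv' : v ∈ ℓ' := by
        rcases List.mem_cons.1 hv with h' | h'
        · exact absurd h' hne
        · exact h'
      rw [List.erase_cons_tail (by simp [hne.symm])]
      have e : (x ++ u :: w') ++ [v] = x ++ u :: (w' ++ [v]) := by simp
      rw [e, List.cons_append]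
      refine Good.cons _ _ _ _ ?_ (ih hv')
      intro a ha
      have := hx a ha
      rcases List.mem_cons.1 this with h' | h'
      · simp [h']
      · rcases eq_or_ne a v with rfl | hav
        · simp
        · simp [List.mem_erase_of_ne hav, h']

lemma good_lar [DecidableEq V] (w : List V) : Good w (LARof w) := by
  induction w using List.reverseRecOn with
  | nil => exact Good.nil
  | append_singleton u v ih =>
    have e : LARof (u ++ [v]) = larStep (LARof u) v := by
      simp [LARof, List.foldl_append]
    rw [e]
    by_cases hv : v ∈ LARof u
    · exact good_erase ih v hv
    · unfold larStep
      rw [List.erase_of_not_mem hv]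
      simpa using good_append ih [] v (by simp)

lemma good_to_fin {w ℓ : List V} (h : Good w ℓ) :
    ∃ x : Fin ℓ.length → List V,
      w = (List.ofFn fun j => x j ++ [ℓ.get j]).flatten ∧
        ∀ j : Fin ℓ.length, ∀ a ∈ x j, a ∈ ℓ.drop j.1 := by
  induction h with
  | nil => exact ⟨Fin.elim0, by simp, fun j => j.elim0⟩
  | cons x w' ℓ' u hx h ih =>
    obtain ⟨f, hf1, hf2⟩ := ih
    refine ⟨Fin.cases x (fun i => f i), ?_, ?_⟩
    · rw [List.ofFn_succ, List.flatten_cons]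
      have e2 : (List.ofFn fun i : Fin ℓ'.length =>
          (Fin.cases (motive := fun _ => List V) x f) i.succ ++ [(u :: ℓ').get i.succ]) =
          List.ofFn fun j => f j ++ [ℓ'.get j] := by
        congr 1
      rw [e2, ← hf1]
      simp
    · intro j a ha
      induction j using Fin.cases with
      | zero => simpa using hx a (by simpa using ha)
      | succ i =>
        have := hf2 i a (by simpa using ha)
        simpa using this

/-- If `LAR(w) = v_k ⋯ v_1`, then `w` factorizes as
`w = x_k v_k x_{k-1} v_{k-1} ⋯ x_1 v_1` where the letters of `x_i` all belong to
`{v_1, …, v_i}`. (Here the `j`-th entry of `LAR w`, `j = 0, …, k-1`, is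
`v_{k-j}`, and `{v_1, …, v_{k-j}}` is the set of letters of `(LAR w).drop j`.) -/
theorem lar_factorization [DecidableEq V] (w : List V) (hw : w ≠ []) :
    ∃ x : Fin (LARof w).length → List V,
      w = (List.ofFn fun j => x j ++ [(LARof w).get j]).flatten ∧
        ∀ j : Fin (LARof w).length, ∀ a ∈ x j, a ∈ (LARof w).drop j.1 := by
  exact good_to_fin (good_lar w)
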